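/- In d dimensions with d ≠ 1, d ≠ 2, the operators 𝒪^{λ₁}_{α₁β₁}{}^{λ₂}_{α₂β₂}(𝔤) = (1/4)(δ^{λ₁}_{α₂}δ^{λ₂}_{α₁}𝔤_{β₁β₂} + [3 symmetrizations]) − (1/4)𝔤^{λ₁λ₂}(𝔤_{α₁α₂}𝔤_{β₁β₂} + 𝔤_{α₁β₂}𝔤_{α₂β₁}) + (1/(2(d−2)))𝔤^{λ₁λ₂}𝔤_{α₁β₁}𝔤_{α₂β₂} and (𝒪⁻¹)_{λ₁}{}^{α₁β₁}{}_{λ₂}{}^{α₂β₂}(𝔤) = (1/2)(δ_{λ₁}^{α₂}δ_{λ₂}^{α₁}𝔤^{β₁β₂} + [3 symmetrizations]) − (1/(2(d−1)))(δ_{λ₁}^{α₁}δ_{λ₂}^{α₂}𝔤^{β₁β₂} + [3 symmetrizations]) are mutually inverse: contracting 𝒪⁻¹ with 𝒪 over the triple index (λ, symmetric pair) yields δ_{λ₁}^{λ₃} I_{α₁β₁}^{α₃β₃}. -/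
import Mathlib

noncomputable section

/-- Kronecker delta. -/
def kron {d : ℕ} (i j : Fin d) : ℝ := if i = j then 1 else 0

/-- Identity on symmetric rank-2 tensors. -/
def Isym {d : ℕ} (α β ρ σ : Fin d) : ℝ :=
  (kron α ρ * kron β σ + kron α σ * kron β ρ) / 2

namespace Stmt14Aux

variable {d : ℕ}

def Op (d : ℕ) (g ginv : Fin d → Fin d → ℝ) (l1 a1 b1 l2 a2 b2 : Fin d) : ℝ :=
  (1 / 4) * (kron l1 a2 * kron l2 a1 * g b1 b2 + kron l1 b2 * kron l2 a1 * g b1 a2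
    + kron l1 a2 * kron l2 b1 * g a1 b2 + kron l1 b2 * kron l2 b1 * g a1 a2)
  - (1 / 4) * ginv l1 l2 * (g a1 a2 * g b1 b2 + g a1 b2 * g a2 b1)
  + (1 / (2 * ((d : ℝ) - 2))) * ginv l1 l2 * g a1 b1 * g a2 b2

def Oi (d : ℕ) (ginv : Fin d → Fin d → ℝ) (l1 a1 b1 l2 a2 b2 : Fin d) : ℝ :=
  (1 / 2) * (kron l1 a2 * kron l2 a1 * ginv b1 b2 + kron l1 b2 * kron l2 a1 * ginv b1 a2
    + kron l1 a2 * kron l2 b1 * ginv a1 b2 + kron l1 b2 * kron l2 b1 * ginv a1 a2)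
  - (1 / (2 * ((d : ℝ) - 1)))
    * (kron l1 a1 * kron l2 a2 * ginv b1 b2 + kron l1 a1 * kron l2 b2 * ginv b1 a2
      + kron l1 b1 * kron l2 a2 * ginv a1 b2 + kron l1 b1 * kron l2 b2 * ginv a1 a2)

lemma sumc (f h : Fin d → ℝ) (H : ∀ μ, f μ = h μ) : ∑ μ, f μ = ∑ μ, h μ :=
  Finset.sum_congr rfl fun μ _ => H μ

lemma kron_comm (i j : Fin d) : kron i j = kron j i := by simp [kron, eq_comm]

section Contractions

variable (g ginv : Fin d → Fin d → ℝ)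
variable (hg : ∀ μ ν, g μ ν = g ν μ) (hginv : ∀ μ ν, ginv μ ν = ginv ν μ)
variable (hinv' : ∀ μ ν, ∑ l, ginv μ l * g l ν = kron μ ν)

lemma Cdelta (x y : Fin d) : ∑ μ, ginv x μ * kron y μ = ginv x y := by
  simp [kron]

lemma Ckk (x y : Fin d) : ∑ μ, kron μ x * kron y μ = kron y x := by
  simp [kron]

lemma Ckg (x y : Fin d) : ∑ μ, kron μ x * g μ y = g x y := by
  simp [kron]

include hg hinv' in
lemma Cright (x y : Fin d) : ∑ μ, ginv x μ * g y μ = kron x y := by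
  rw [sumc (fun μ => ginv x μ * g y μ) (fun μ => ginv x μ * g μ y)
    (fun μ => by show ginv x μ * g y μ = ginv x μ * g μ y; rw [hg y μ])]
  exact hinv' x y

include hginv hinv' in
lemma Cleft' (x y : Fin d) : ∑ μ, ginv μ x * g μ y = kron x y := by
  rw [sumc (fun μ => ginv μ x * g μ y) (fun μ => ginv x μ * g μ y)
    (fun μ => by show ginv μ x * g μ y = ginv x μ * g μ y; rw [hginv μ x])]
  exact hinv' x y

include hg hginv hinv' in
lemma Cright' (x y : Fin d) : ∑ μ, ginv μ x * g y μ = kron x y := by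
  rw [sumc (fun μ => ginv μ x * g y μ) (fun μ => ginv x μ * g μ y)
    (fun μ => by show ginv μ x * g y μ = ginv x μ * g μ y; rw [hginv μ x, hg y μ])]
  exact hinv' x y

include hg hginv hinv' in
lemma contractA (x y z l3 a3 b3 : Fin d) :
    ∑ μ, ginv z μ * Op d g ginv x y μ l3 a3 b3
    = (1/4) * (kron x a3 * kron l3 y * kron z b3 + kron x b3 * kron l3 y * kron z a3
        + kron x a3 * ginv z l3 * g y b3 + kron x b3 * ginv z l3 * g y a3)
      - (1/4) * ginv x l3 * (g y a3 * kron z b3 + g y b3 * kron z a3)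
      + (1/(2*((d:ℝ)-2))) * ginv x l3 * kron z y * g a3 b3 := by
  have hpt : ∀ μ, ginv z μ * Op d g ginv x y μ l3 a3 b3 =
      ((1/4) * (kron x a3 * kron l3 y) - (1/4) * (ginv x l3 * g y a3)) * (ginv z μ * g μ b3)
    + ((1/4) * (kron x b3 * kron l3 y)) * (ginv z μ * g μ a3)
    + ((1/4) * (kron x a3 * g y b3 + kron x b3 * g y a3)) * (ginv z μ * kron l3 μ)
    + (-(1/4) * (ginv x l3 * g y b3)) * (ginv z μ * g a3 μ)
    + ((1/(2*((d:ℝ)-2))) * (ginv x l3 * g a3 b3)) * (ginv z μ * g y μ) := by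
    intro μ; simp only [Op]; ring
  rw [sumc _ _ hpt]
  simp only [Finset.sum_add_distrib, ← Finset.mul_sum]
  rw [hinv' z b3, hinv' z a3, Cdelta ginv z l3, Cright g ginv hg hinv' z a3,
    Cright g ginv hg hinv' z y]
  ring

include hg hginv hinv' in
lemma traceS (ν l3 a3 b3 : Fin d) :
    ∑ μ, Op d g ginv μ μ ν l3 a3 b3
    = ((1/2) + 1/(2*((d:ℝ)-2))) * (kron l3 ν * g a3 b3) := by
  have hpt : ∀ μ, Op d g ginv μ μ ν l3 a3 b3 =
      ((1/4) * g ν b3) * (kron μ a3 * kron l3 μ)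
    + ((1/4) * g ν a3) * (kron μ b3 * kron l3 μ)
    + ((1/4) * kron l3 ν) * (kron μ a3 * g μ b3)
    + ((1/4) * kron l3 ν) * (kron μ b3 * g μ a3)
    + (-(1/4) * g ν b3) * (ginv μ l3 * g μ a3)
    + (-(1/4) * g a3 ν) * (ginv μ l3 * g μ b3)
    + ((1/(2*((d:ℝ)-2))) * g a3 b3) * (ginv μ l3 * g μ ν) := by
    intro μ; simp only [Op]; ring
  rw [sumc _ _ hpt]
  simp only [Finset.sum_add_distrib, ← Finset.mul_sum]
  rw [Ckk a3 l3, Ckk b3 l3, Ckg g a3 b3, Ckg g b3 a3,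
    Cleft' g ginv hginv hinv' l3 a3, Cleft' g ginv hginv hinv' l3 b3,
    Cleft' g ginv hginv hinv' l3 ν]
  rw [hg b3 a3, hg a3 ν]
  ring

include hg hginv hinv' in
lemma traceS' (ν l3 a3 b3 : Fin d) :
    ∑ μ, Op d g ginv μ ν μ l3 a3 b3
    = ((1/2) + 1/(2*((d:ℝ)-2))) * (kron l3 ν * g a3 b3) := by
  have hpt : ∀ μ, Op d g ginv μ ν μ l3 a3 b3 =
      ((1/4) * kron l3 ν) * (kron μ a3 * g μ b3)
    + ((1/4) * kron l3 ν) * (kron μ b3 * g μ a3)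
    + ((1/4) * g ν b3) * (kron μ a3 * kron l3 μ)
    + ((1/4) * g ν a3) * (kron μ b3 * kron l3 μ)
    + (-(1/4) * g ν a3) * (ginv μ l3 * g μ b3)
    + (-(1/4) * g ν b3) * (ginv μ l3 * g a3 μ)
    + ((1/(2*((d:ℝ)-2))) * g a3 b3) * (ginv μ l3 * g ν μ) := by
    intro μ; simp only [Op]; ring
  rw [sumc _ _ hpt]
  simp only [Finset.sum_add_distrib, ← Finset.mul_sum]
  rw [Ckg g a3 b3, Ckg g b3 a3, Ckk a3 l3, Ckk b3 l3,
    Cleft' g ginv hginv hinv' l3 b3, Cright' g ginv hg hginv hinv' l3 a3,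
    Cright' g ginv hg hginv hinv' l3 ν]
  rw [hg b3 a3]
  ring

include hg hginv hinv' in
lemma traceB (z l3 a3 b3 : Fin d) :
    ∑ μ, ∑ ν, ginv z ν * Op d g ginv μ μ ν l3 a3 b3
    = ((1/2) + 1/(2*((d:ℝ)-2))) * (ginv z l3 * g a3 b3) := by
  rw [Finset.sum_comm]
  have h1 : ∀ ν, ∑ μ, ginv z ν * Op d g ginv μ μ ν l3 a3 b3
      = (((1/2) + 1/(2*((d:ℝ)-2))) * g a3 b3) * (ginv z ν * kron l3 ν) := by
    intro ν
    rw [← Finset.mul_sum, traceS g ginv hg hginv hinv' ν l3 a3 b3]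
    ring
  rw [sumc _ _ h1, ← Finset.mul_sum, Cdelta ginv z l3]
  ring

include hg hginv hinv' in
lemma traceB' (z l3 a3 b3 : Fin d) :
    ∑ μ, ∑ ν, ginv z ν * Op d g ginv μ ν μ l3 a3 b3
    = ((1/2) + 1/(2*((d:ℝ)-2))) * (ginv z l3 * g a3 b3) := by
  rw [Finset.sum_comm]
  have h1 : ∀ ν, ∑ μ, ginv z ν * Op d g ginv μ ν μ l3 a3 b3
      = (((1/2) + 1/(2*((d:ℝ)-2))) * g a3 b3) * (ginv z ν * kron l3 ν) := by
    intro ν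
    rw [← Finset.mul_sum, traceS' g ginv hg hginv hinv' ν l3 a3 b3]
    ring
  rw [sumc _ _ h1, ← Finset.mul_sum, Cdelta ginv z l3]
  ring

include hg in
lemma Op_sym12 (l x y l2 a2 b2 : Fin d) :
    Op d g ginv l x y l2 a2 b2 = Op d g ginv l y x l2 a2 b2 := by
  simp only [Op]
  rw [hg a2 x, hg y x, hg a2 y]
  ring

include hg hginv in
lemma Op_exch (l1 a1 b1 l2 a2 b2 : Fin d) :
    Op d g ginv l1 a1 b1 l2 a2 b2 = Op d g ginv l2 a2 b2 l1 a1 b1 := by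
  simp only [Op]
  rw [hginv l2 l1, hg b2 b1, hg b2 a1, hg a2 b1, hg a2 a1]
  ring

include hginv in
lemma Oi_exch (l1 a1 b1 l2 a2 b2 : Fin d) :
    Oi d ginv l1 a1 b1 l2 a2 b2 = Oi d ginv l2 a2 b2 l1 a1 b1 := by
  simp only [Oi]
  rw [hginv b2 b1, hginv b2 a1, hginv a2 b1, hginv a2 a1]
  ring

lemma contract_Oi (T : Fin d → Fin d → Fin d → ℝ) (l1 a1 b1 : Fin d) :
    ∑ l2, ∑ a2, ∑ b2, Oi d ginv l1 a1 b1 l2 a2 b2 * T l2 a2 b2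
    = (1/2) * ((∑ μ, ginv b1 μ * T a1 l1 μ) + (∑ μ, ginv b1 μ * T a1 μ l1)
      + (∑ μ, ginv a1 μ * T b1 l1 μ) + (∑ μ, ginv a1 μ * T b1 μ l1))
    - (1 / (2 * ((d : ℝ) - 1))) *
        (kron l1 a1 * (∑ μ, ∑ ν, ginv b1 ν * T μ μ ν)
        + kron l1 a1 * (∑ μ, ∑ ν, ginv b1 ν * T μ ν μ)
        + kron l1 b1 * (∑ μ, ∑ ν, ginv a1 ν * T μ μ ν)
        + kron l1 b1 * (∑ μ, ∑ ν, ginv a1 ν * T μ ν μ)) := by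
  simp only [Oi, sub_mul, add_mul, mul_assoc, Finset.sum_sub_distrib, Finset.sum_add_distrib]
  simp [kron, mul_ite, ite_mul, mul_zero, zero_mul, add_mul, mul_add,
    Finset.sum_add_distrib, Finset.sum_ite_irrel, Finset.sum_const_zero,
    Finset.mul_sum, mul_comm, mul_left_comm]

include hg hginv hinv' in
lemma key1 (hd1 : ((d:ℝ) - 1) ≠ 0) (hd2 : ((d:ℝ) - 2) ≠ 0) (l1 a1 b1 l3 a3 b3 : Fin d) :
    ∑ l2, ∑ a2, ∑ b2, Oi d ginv l1 a1 b1 l2 a2 b2 * Op d g ginv l2 a2 b2 l3 a3 b3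
    = kron l1 l3 * Isym a1 b1 a3 b3 := by
  rw [contract_Oi ginv (fun l2 a2 b2 => Op d g ginv l2 a2 b2 l3 a3 b3) l1 a1 b1]
  rw [sumc (fun μ => ginv b1 μ * Op d g ginv a1 μ l1 l3 a3 b3)
      (fun μ => ginv b1 μ * Op d g ginv a1 l1 μ l3 a3 b3)
      (fun μ => by show ginv b1 μ * Op d g ginv a1 μ l1 l3 a3 b3
                      = ginv b1 μ * Op d g ginv a1 l1 μ l3 a3 b3
                   rw [Op_sym12 g ginv hg a1 μ l1 l3 a3 b3]),
    sumc (fun μ => ginv a1 μ * Op d g ginv b1 μ l1 l3 a3 b3)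
      (fun μ => ginv a1 μ * Op d g ginv b1 l1 μ l3 a3 b3)
      (fun μ => by show ginv a1 μ * Op d g ginv b1 μ l1 l3 a3 b3
                      = ginv a1 μ * Op d g ginv b1 l1 μ l3 a3 b3
                   rw [Op_sym12 g ginv hg b1 μ l1 l3 a3 b3])]
  rw [contractA g ginv hg hginv hinv' a1 l1 b1 l3 a3 b3,
    contractA g ginv hg hginv hinv' b1 l1 a1 l3 a3 b3,
    traceB g ginv hg hginv hinv' b1 l3 a3 b3,
    traceB' g ginv hg hginv hinv' b1 l3 a3 b3,
    traceB g ginv hg hginv hinv' a1 l3 a3 b3,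
    traceB' g ginv hg hginv hinv' a1 l3 a3 b3]
  rw [kron_comm l3 l1, kron_comm a1 l1, kron_comm b1 l1]
  simp only [Isym]
  field_simp
  ring

include hg hginv hinv' in
lemma key2 (hd1 : ((d:ℝ) - 1) ≠ 0) (hd2 : ((d:ℝ) - 2) ≠ 0) (l1 a1 b1 l3 a3 b3 : Fin d) :
    ∑ l2, ∑ a2, ∑ b2, Op d g ginv l1 a1 b1 l2 a2 b2 * Oi d ginv l2 a2 b2 l3 a3 b3
    = kron l1 l3 * Isym a1 b1 a3 b3 := by
  have hpt : ∀ l2 a2 b2 : Fin d,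
      Op d g ginv l1 a1 b1 l2 a2 b2 * Oi d ginv l2 a2 b2 l3 a3 b3
      = Oi d ginv l3 a3 b3 l2 a2 b2 * Op d g ginv l2 a2 b2 l1 a1 b1 := by
    intro l2 a2 b2
    rw [Op_exch g ginv hg hginv l1 a1 b1 l2 a2 b2,
      Oi_exch ginv hginv l2 a2 b2 l3 a3 b3]
    ring
  simp_rw [hpt]
  rw [key1 g ginv hg hginv hinv' hd1 hd2 l3 a3 b3 l1 a1 b1]
  rw [kron_comm l3 l1]
  simp only [Isym]
  rw [kron_comm a3 a1, kron_comm b3 b1, kron_comm a3 b1, kron_comm b3 a1]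
  ring

end Contractions

end Stmt14Aux

/-- The kinetic operator `𝒪(𝔤)` of the first-order Cheung–Remmen form of the
Hilbert action and the stated `𝒪⁻¹(𝔤)` are mutually inverse: contracting over
the triple index (λ, symmetric pair) yields `δ_{λ₁}^{λ₃} I_{α₁β₁}^{α₃β₃}`. -/
theorem stmt14 (d : ℕ) (hd1 : d ≠ 1) (hd2 : d ≠ 2)
    (g ginv : Fin d → Fin d → ℝ)
    (hg : ∀ μ ν, g μ ν = g ν μ) (hginv : ∀ μ ν, ginv μ ν = ginv ν μ)
    (hinv : ∀ μ ν, ∑ l, g μ l * ginv l ν = kron μ ν)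
    (hinv' : ∀ μ ν, ∑ l, ginv μ l * g l ν = kron μ ν) :
    -- 𝒪^{λ₁}_{α₁β₁}{}^{λ₂}_{α₂β₂}(𝔤)
    let Oop : Fin d → Fin d → Fin d → Fin d → Fin d → Fin d → ℝ :=
      fun l1 a1 b1 l2 a2 b2 =>
        (1 / 4) * (kron l1 a2 * kron l2 a1 * g b1 b2 + kron l1 b2 * kron l2 a1 * g b1 a2
          + kron l1 a2 * kron l2 b1 * g a1 b2 + kron l1 b2 * kron l2 b1 * g a1 a2)
        - (1 / 4) * ginv l1 l2 * (g a1 a2 * g b1 b2 + g a1 b2 * g a2 b1)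
        + (1 / (2 * ((d : ℝ) - 2))) * ginv l1 l2 * g a1 b1 * g a2 b2
    -- (𝒪⁻¹)_{λ₁}{}^{α₁β₁}{}_{λ₂}{}^{α₂β₂}(𝔤)
    let Oinv : Fin d → Fin d → Fin d → Fin d → Fin d → Fin d → ℝ :=
      fun l1 a1 b1 l2 a2 b2 =>
        (1 / 2) * (kron l1 a2 * kron l2 a1 * ginv b1 b2 + kron l1 b2 * kron l2 a1 * ginv b1 a2
          + kron l1 a2 * kron l2 b1 * ginv a1 b2 + kron l1 b2 * kron l2 b1 * ginv a1 a2)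
        - (1 / (2 * ((d : ℝ) - 1)))
          * (kron l1 a1 * kron l2 a2 * ginv b1 b2 + kron l1 a1 * kron l2 b2 * ginv b1 a2
            + kron l1 b1 * kron l2 a2 * ginv a1 b2 + kron l1 b1 * kron l2 b2 * ginv a1 a2)
    (∀ l1 a1 b1 l3 a3 b3,
      ∑ l2, ∑ a2, ∑ b2, Oinv l1 a1 b1 l2 a2 b2 * Oop l2 a2 b2 l3 a3 b3
        = kron l1 l3 * Isym a1 b1 a3 b3) ∧
    (∀ l1 a1 b1 l3 a3 b3,
      ∑ l2, ∑ a2, ∑ b2, Oop l1 a1 b1 l2 a2 b2 * Oinv l2 a2 b2 l3 a3 b3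
        = kron l1 l3 * Isym a1 b1 a3 b3) := by
  intro Oop Oinv
  have hd1' : ((d:ℝ) - 1) ≠ 0 := by
    intro h
    exact hd1 (by exact_mod_cast sub_eq_zero.mp h)
  have hd2' : ((d:ℝ) - 2) ≠ 0 := by
    intro h
    have : (d:ℝ) = 2 := sub_eq_zero.mp h
    exact hd2 (by exact_mod_cast this)
  constructor
  · intro l1 a1 b1 l3 a3 b3
    exact Stmt14Aux.key1 g ginv hg hginv hinv' hd1' hd2' l1 a1 b1 l3 a3 b3
  · intro l1 a1 b1 l3 a3 b3
    exact Stmt14Aux.key2 g ginv hg hginv hinv' hd1' hd2' l1 a1 b1 l3 a3 b3
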